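/- Let H be a complex Hilbert space with inner product ⟪·,·⟫ linear in the first argument, Ω a set, and Φ : Ω → H a map. Let (x_n)_{n∈ℕ} and (y_n)_{n∈ℕ} be sequences in H with ⟪y_n, x_m⟫ = δ_{nm}, with the linear span of {y_n} dense in H, with constants 0 < A ≤ B such that A‖c‖_{ℓ²} ≤ ‖∑_n c_n y_n‖ ≤ B‖c‖_{ℓ²} for every c ∈ ℓ²(ℕ) (so (y_n) is a Riesz basis for H with biorthogonal sequence (x_n)), and such that every x ∈ H satisfies x = ∑_n ⟪x, x_n⟫ y_n with convergence in H. Assume there exist points (t_n)_{n∈ℕ} in Ω and nonzero complex scalars (a_n)_{n∈ℕ} with Φ(t_n) = \overline{a_n} x_n for all n. For x ∈ H define f_x(t) = ⟪x, Φ(t)⟫ and S_n(t) = ⟪y_n, Φ(t)⟫. Then for every x ∈ H and every t ∈ Ω: f_x(t) = ∑_{n∈ℕ} f_x(t_n) S_n(t)/a_n, the series converging absolutely; moreover, on every subset of Ω on which t ↦ ‖Φ(t)‖ is bounded, the convergence is uniform. -/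

import Mathlib

open scoped InnerProductSpace
open Filter Topology

lemma finsupp_lp_exists {H : Type*} [NormedAddCommGroup H] [InnerProductSpace ℂ H]
    (y : ℕ → H) (c : ℕ → ℂ) (F : Finset ℕ) :
    ∃ d : lp (fun _ : ℕ => ℂ) 2, (∀ n, d n = if n ∈ F then c n else 0) ∧
      ‖d‖ ^ 2 = ∑ n ∈ F, ‖c n‖ ^ 2 ∧
      HasSum (fun n : ℕ => d n • y n) (∑ n ∈ F, c n • y n) := by
  have hcoe : ∀ n, (((∑ m ∈ F, lp.single 2 m (c m)) : lp (fun _ : ℕ => ℂ) 2) : ℕ → ℂ) n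
      = if n ∈ F then c n else 0 := by
    intro n
    rw [lp.coeFn_sum, Finset.sum_apply]
    simp [lp.single_apply, Pi.single_apply, Finset.sum_dite_eq]
  refine ⟨∑ n ∈ F, lp.single 2 n (c n), hcoe, ?_, ?_⟩
  · have := lp.norm_sum_single (p := 2) (by norm_num) (fun n : ℕ => c n) F
    have h2 : ((2:ENNReal)).toReal = ((2:ℕ):ℝ) := by norm_num
    rw [h2] at this
    simp only [Real.rpow_natCast] at this
    exact_mod_cast this
  · have h0 : ∀ n ∉ F, (((∑ m ∈ F, lp.single 2 m (c m)) : lp (fun _ : ℕ => ℂ) 2) n) • y n = 0 := by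
      intro n hn; rw [hcoe n, if_neg hn, zero_smul]
    have hsum := hasSum_sum_of_ne_finset_zero (L := SummationFilter.unconditional ℕ) h0
    have heq : (∑ n ∈ F, (((∑ m ∈ F, lp.single 2 m (c m)) : lp (fun _ : ℕ => ℂ) 2) n) • y n)
        = ∑ n ∈ F, c n • y n :=
      Finset.sum_congr rfl fun n hn => by rw [hcoe n, if_pos hn]
    rw [heq] at hsum
    exact hsum

/-- Lower Riesz bound on finite sums. -/
lemma riesz_finset_lower {H : Type*} [NormedAddCommGroup H] [InnerProductSpace ℂ H]
    (y : ℕ → H) (A : ℝ) (hA : 0 ≤ A)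
    (hlow : ∀ c : lp (fun _ : ℕ => ℂ) 2, ∃ z : H,
      HasSum (fun n : ℕ => c n • y n) z ∧ A * ‖c‖ ≤ ‖z‖)
    (c : ℕ → ℂ) (F : Finset ℕ) :
    A ^ 2 * ∑ n ∈ F, ‖c n‖ ^ 2 ≤ ‖∑ n ∈ F, c n • y n‖ ^ 2 := by
  obtain ⟨d, -, hd2, hdsum⟩ := finsupp_lp_exists y c F
  obtain ⟨z, hz, hzA⟩ := hlow d
  have hz' : z = ∑ n ∈ F, c n • y n := hz.unique hdsum
  have h1 : (A * ‖d‖) ^ 2 ≤ ‖z‖ ^ 2 :=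
    pow_le_pow_left₀ (mul_nonneg hA (norm_nonneg d)) hzA 2
  calc A ^ 2 * ∑ n ∈ F, ‖c n‖ ^ 2 = (A * ‖d‖) ^ 2 := by rw [← hd2]; ring
    _ ≤ ‖z‖ ^ 2 := h1
    _ = ‖∑ n ∈ F, c n • y n‖ ^ 2 := by rw [hz']

/-- ℓ² bound for coefficients of a converging Riesz expansion. -/
lemma sq_summable_coeff {H : Type*} [NormedAddCommGroup H] [InnerProductSpace ℂ H]
    (y : ℕ → H) (A : ℝ) (hA : 0 < A)
    (hlow : ∀ c : lp (fun _ : ℕ => ℂ) 2, ∃ z : H,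
      HasSum (fun n : ℕ => c n • y n) z ∧ A * ‖c‖ ≤ ‖z‖)
    (c : ℕ → ℂ) (v : H) (hv : HasSum (fun n : ℕ => c n • y n) v) :
    Summable (fun n : ℕ => ‖c n‖ ^ 2) := by
  obtain ⟨F0, hF0⟩ := hv.summable.vanishing (Metric.ball_mem_nhds (0 : H) one_pos)
  refine summable_of_sum_range_le (c := 1 / A ^ 2 + ∑ n ∈ F0, ‖c n‖ ^ 2)
    (fun n => sq_nonneg _) (fun N => ?_)
  have hsplit : Finset.range N \ F0 ∪ Finset.range N ∩ F0 = Finset.range N :=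
    Finset.sdiff_union_inter _ _
  have hdisj : Disjoint (Finset.range N \ F0) (Finset.range N ∩ F0) :=
    Finset.sdiff_disjoint.mono_right Finset.inter_subset_right
  rw [← hsplit, Finset.sum_union hdisj]
  have h1 : ∑ n ∈ Finset.range N \ F0, ‖c n‖ ^ 2 ≤ 1 / A ^ 2 := by
    have hb : ‖∑ n ∈ Finset.range N \ F0, c n • y n‖ < 1 := by
      have := hF0 (Finset.range N \ F0) Finset.sdiff_disjoint
      simpa [Metric.mem_ball, dist_eq_norm] using this
    have hkey := riesz_finset_lower y A hA.le hlow c (Finset.range N \ F0)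
    have hb2 : ‖∑ n ∈ Finset.range N \ F0, c n • y n‖ ^ 2 ≤ 1 := by
      nlinarith [norm_nonneg (∑ n ∈ Finset.range N \ F0, c n • y n)]
    rw [le_div_iff₀ (by positivity : (0:ℝ) < A ^ 2)]
    nlinarith
  have h2 : ∑ n ∈ Finset.range N ∩ F0, ‖c n‖ ^ 2 ≤ ∑ n ∈ F0, ‖c n‖ ^ 2 :=
    Finset.sum_le_sum_of_subset_of_nonneg Finset.inter_subset_right
      (fun n _ _ => sq_nonneg _)
  linarith

/-- ℓ² bound for inner products against a Riesz sequence. -/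
lemma sq_summable_inner {H : Type*} [NormedAddCommGroup H] [InnerProductSpace ℂ H]
    (y : ℕ → H) (B : ℝ)
    (hup : ∀ c : lp (fun _ : ℕ => ℂ) 2, ∃ z : H,
      HasSum (fun n : ℕ => c n • y n) z ∧ ‖z‖ ≤ B * ‖c‖)
    (w : H) :
    Summable (fun n : ℕ => ‖⟪w, y n⟫_ℂ‖ ^ 2) := by
  set b : ℕ → ℂ := fun n => ⟪w, y n⟫_ℂ with hb
  refine summable_of_sum_range_le (c := (B * ‖w‖) ^ 2) (fun n => sq_nonneg _)
    (fun N => ?_)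
  set F := Finset.range N
  obtain ⟨d, -, hd2, hdsum⟩ := finsupp_lp_exists y (fun n => (starRingEnd ℂ) (b n)) F
  obtain ⟨z, hz, hzB⟩ := hup d
  have hz' : z = ∑ n ∈ F, (starRingEnd ℂ) (b n) • y n := hz.unique hdsum
  have hinner : ⟪w, z⟫_ℂ = ((∑ n ∈ F, ‖b n‖ ^ 2 : ℝ) : ℂ) := by
    rw [hz', inner_sum]
    push_cast
    refine Finset.sum_congr rfl fun n _ => ?_
    rw [inner_smul_right]
    exact_mod_cast RCLike.conj_mul (b n)
  have hS : (∑ n ∈ F, ‖b n‖ ^ 2 : ℝ) ≤ ‖w‖ * ‖z‖ := by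
    have := norm_inner_le_norm (𝕜 := ℂ) w z
    rw [hinner] at this
    have h0 : (0:ℝ) ≤ ∑ n ∈ F, ‖b n‖ ^ 2 := Finset.sum_nonneg fun n _ => sq_nonneg _
    rwa [Complex.norm_real, Real.norm_of_nonneg h0] at this
  have hd2' : ‖d‖ ^ 2 = ∑ n ∈ F, ‖b n‖ ^ 2 := by
    rw [hd2]; exact Finset.sum_congr rfl fun n _ => by rw [RCLike.norm_conj]
  have hzB' : ‖z‖ ≤ B * ‖d‖ := hzB
  nlinarith [norm_nonneg d, norm_nonneg w, norm_nonneg z, sq_nonneg (B * ‖w‖ - ‖d‖),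
    mul_nonneg (norm_nonneg w) (norm_nonneg z)]

theorem stmt12 {Ω : Type*} {H : Type*}
    [NormedAddCommGroup H] [InnerProductSpace ℂ H] [CompleteSpace H]
    (Φ : Ω → H) (x y : ℕ → H)
    (hbi : ∀ n m : ℕ, ⟪x m, y n⟫_ℂ = if n = m then 1 else 0)
    (hdense : Dense ((Submodule.span ℂ (Set.range y) : Submodule ℂ H) : Set H))
    (A B : ℝ) (hA : 0 < A) (hAB : A ≤ B)
    (hriesz : ∀ c : lp (fun _ : ℕ => ℂ) 2, ∃ z : H,
      HasSum (fun n : ℕ => c n • y n) z ∧ A * ‖c‖ ≤ ‖z‖ ∧ ‖z‖ ≤ B * ‖c‖)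
    (hexp : ∀ v : H, HasSum (fun n : ℕ => ⟪x n, v⟫_ℂ • y n) v)
    (t : ℕ → Ω) (a : ℕ → ℂ) (ha : ∀ n, a n ≠ 0)
    (hinterp : ∀ n : ℕ, Φ (t n) = (starRingEnd ℂ) (a n) • x n) :
    ∀ v : H,
      (∀ s : Ω,
        Summable (fun n : ℕ => ‖⟪Φ (t n), v⟫_ℂ * (⟪Φ s, y n⟫_ℂ / a n)‖) ∧
        ⟪Φ s, v⟫_ℂ = ∑' n : ℕ, ⟪Φ (t n), v⟫_ℂ * (⟪Φ s, y n⟫_ℂ / a n)) ∧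
      ∀ U : Set Ω, (∃ M : ℝ, ∀ s ∈ U, ‖Φ s‖ ≤ M) →
        TendstoUniformlyOn
          (fun (N : ℕ) (s : Ω) =>
            ∑ n ∈ Finset.range N, ⟪Φ (t n), v⟫_ℂ * (⟪Φ s, y n⟫_ℂ / a n))
          (fun s : Ω => ⟪Φ s, v⟫_ℂ) atTop U := by
  intro v
  have hlow : ∀ c : lp (fun _ : ℕ => ℂ) 2, ∃ z : H,
      HasSum (fun n : ℕ => c n • y n) z ∧ A * ‖c‖ ≤ ‖z‖ :=
    fun c => (hriesz c).imp fun z hz => ⟨hz.1, hz.2.1⟩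
  have hup : ∀ c : lp (fun _ : ℕ => ℂ) 2, ∃ z : H,
      HasSum (fun n : ℕ => c n • y n) z ∧ ‖z‖ ≤ B * ‖c‖ :=
    fun c => (hriesz c).imp fun z hz => ⟨hz.1, hz.2.2⟩
  set c : ℕ → ℂ := fun n => ⟪x n, v⟫_ℂ with hc
  have hterm : ∀ (s : Ω) (n : ℕ),
      ⟪Φ (t n), v⟫_ℂ * (⟪Φ s, y n⟫_ℂ / a n) = c n * ⟪Φ s, y n⟫_ℂ := by
    intro s n
    rw [hinterp n, inner_smul_left, RingHomCompTriple.comp_apply]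
    simp only [RingHom.id_apply, hc, div_eq_mul_inv]
    have h : a n * ⟪x n, v⟫_ℂ * (⟪Φ s, y n⟫_ℂ * (a n)⁻¹)
        = ⟪x n, v⟫_ℂ * ⟪Φ s, y n⟫_ℂ * (a n * (a n)⁻¹) := by ring
    rw [h, mul_inv_cancel₀ (ha n), mul_one]
  have hc2 : Summable (fun n : ℕ => ‖c n‖ ^ 2) :=
    sq_summable_coeff y A hA hlow c v (hexp v)
  constructor
  · intro s
    have hb2 : Summable (fun n : ℕ => ‖⟪Φ s, y n⟫_ℂ‖ ^ 2) :=
      sq_summable_inner y B hup (Φ s)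
    have habs : Summable (fun n : ℕ => ‖c n * ⟪Φ s, y n⟫_ℂ‖) := by
      refine Summable.of_nonneg_of_le (fun n => norm_nonneg _)
        (fun n => ?_) ((hc2.add hb2).div_const 2)
      rw [norm_mul]
      nlinarith [sq_nonneg (‖c n‖ - ‖⟪Φ s, y n⟫_ℂ‖)]
    have hsum : HasSum (fun n : ℕ => c n * ⟪Φ s, y n⟫_ℂ) ⟪Φ s, v⟫_ℂ := by
      have h := (hexp v).mapL (innerSL ℂ (Φ s))
      simpa [inner_smul_right] using h
    refine ⟨by simpa only [hterm s] using habs, ?_⟩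
    simp only [hterm s]
    exact hsum.tsum_eq.symm
  · rintro U ⟨M, hM⟩
    rw [Metric.tendstoUniformlyOn_iff]
    intro ε hε
    set M' : ℝ := max M 0 with hM'
    have hM'0 : 0 ≤ M' := le_max_right _ _
    have hMs : ∀ s ∈ U, ‖Φ s‖ ≤ M' := fun s hs => (hM s hs).trans (le_max_left _ _)
    have htend : Tendsto (fun N : ℕ => ∑ n ∈ Finset.range N, c n • y n) atTop (𝓝 v) :=
      (hexp v).tendsto_sum_nat
    have hδ : 0 < ε / (M' + 1) := by positivity
    have hev : ∀ᶠ N in atTop, ‖v - ∑ n ∈ Finset.range N, c n • y n‖ < ε / (M' + 1) := by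
      have h2 := Metric.tendsto_nhds.mp htend (ε / (M' + 1)) hδ
      filter_upwards [h2] with N hN
      rwa [dist_eq_norm, norm_sub_rev] at hN
    filter_upwards [hev] with N hN s hs
    have key : ⟪Φ s, v⟫_ℂ - ∑ n ∈ Finset.range N, c n * ⟪Φ s, y n⟫_ℂ
        = ⟪Φ s, v - ∑ n ∈ Finset.range N, c n • y n⟫_ℂ := by
      rw [inner_sub_right, inner_sum]
      simp [inner_smul_right]
    calc dist ⟪Φ s, v⟫_ℂ (∑ n ∈ Finset.range N, ⟪Φ (t n), v⟫_ℂ * (⟪Φ s, y n⟫_ℂ / a n))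
        = ‖⟪Φ s, v⟫_ℂ - ∑ n ∈ Finset.range N, c n * ⟪Φ s, y n⟫_ℂ‖ := by
          rw [dist_eq_norm]
          congr 2
          exact Finset.sum_congr rfl fun n _ => hterm s n
      _ = ‖⟪Φ s, v - ∑ n ∈ Finset.range N, c n • y n⟫_ℂ‖ := by rw [key]
      _ ≤ ‖Φ s‖ * ‖v - ∑ n ∈ Finset.range N, c n • y n‖ := norm_inner_le_norm _ _
      _ ≤ M' * (ε / (M' + 1)) := by
          apply mul_le_mul (hMs s hs) hN.le (norm_nonneg _) hM'0
      _ < ε := by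
          have h1 : M' * (ε / (M' + 1)) < (M' + 1) * (ε / (M' + 1)) :=
            mul_lt_mul_of_pos_right (by linarith) hδ
          have h2 : (M' + 1) * (ε / (M' + 1)) = ε := by field_simp
          linarith
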